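/- For every connected oriented skeleton Γ = (E, op, nx, P), the group H_Γ is a free abelian group of rank |E|/3; equivalently, the defining linear conditions — one ℤ²-valued condition per vertex (taking one representative α of each nx-orbit in condition (i)) and one ℤ²-valued condition per edge — are linearly independent over ℚ. -/

import Mathlib

/-- The matrix `X = [[-1, 1], [-1, 0]] ∈ SL(2, ℤ)` acting on column vectors `ℤ²`. -/
def Xact : ℤ × ℤ →+ ℤ × ℤ :=
  AddMonoidHom.mk' (fun v => (-v.1 + v.2, -v.1))
    (by
      intro a b
      simp only [Prod.fst_add, Prod.snd_add, Prod.mk_add_mk, Prod.mk.injEq]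
      constructor <;> ring)

/-- The matrix `Y = [[0, -1], [1, 0]] ∈ SL(2, ℤ)` acting on column vectors `ℤ²`. -/
def Yact : ℤ × ℤ →+ ℤ × ℤ :=
  AddMonoidHom.mk' (fun v => (-v.2, v.1))
    (by
      intro a b
      simp only [Prod.fst_add, Prod.snd_add, Prod.mk_add_mk, Prod.mk.injEq]
      constructor <;> first | ring | trivial)

variable {E : Type*}

/-- The vertex condition at `α`: `h(α) + X·h(nx α) + X²·h(nx² α)`. -/
def condV (nx : Equiv.Perm E) (α : E) : (E → ℤ × ℤ) →+ ℤ × ℤ :=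
  AddMonoidHom.mk' (fun h => h α + Xact (h (nx α)) + Xact (Xact (h (nx (nx α)))))
    (by intro a b; simp only [Pi.add_apply, map_add]; abel)

/-- The edge condition at a head `α`: `h(α) + Y·h(op α)`. -/
def condE (op : Equiv.Perm E) (α : E) : (E → ℤ × ℤ) →+ ℤ × ℤ :=
  AddMonoidHom.mk' (fun h => h α + Yact (h (op α)))
    (by intro a b; simp only [Pi.add_apply, map_add]; abel)

/-- The group `H_Γ` of an oriented skeleton `Γ = (E, op, nx, P)`: functions
`h : E → ℤ²` with `h(α) + X·h(nx α) + X²·h(nx² α) = 0` for all `α` and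
`h(α) + Y·h(op α) = 0` for all heads `α ∈ P`. -/
def HGrp [DecidableEq E] (op nx : Equiv.Perm E) (P : Finset E) :
    AddSubgroup (E → ℤ × ℤ) :=
  (⨅ α : E, (condV nx α).ker) ⊓ (⨅ α ∈ P, (condE op α).ker)

/-- `X` over `ℚ`. -/
def Xql : ℚ × ℚ →ₗ[ℚ] ℚ × ℚ where
  toFun v := (-v.1 + v.2, -v.1)
  map_add' a b := by
    simp only [Prod.fst_add, Prod.snd_add, Prod.mk_add_mk, Prod.mk.injEq]
    constructor <;> ring
  map_smul' r v := by
    simp only [Prod.smul_fst, Prod.smul_snd, Prod.smul_mk, smul_eq_mul, RingHom.id_apply,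
      Prod.mk.injEq]
    constructor <;> ring

/-- `Y` over `ℚ`. -/
def Yql : ℚ × ℚ →ₗ[ℚ] ℚ × ℚ where
  toFun v := (-v.2, v.1)
  map_add' a b := by
    simp only [Prod.fst_add, Prod.snd_add, Prod.mk_add_mk, Prod.mk.injEq]
    constructor <;> first | ring | trivial
  map_smul' r v := by
    simp only [Prod.smul_fst, Prod.smul_snd, Prod.smul_mk, smul_eq_mul, RingHom.id_apply,
      Prod.mk.injEq]
    constructor <;> first | ring | trivial

/-- `Xᵀ` over `ℚ`. -/
def Xtl : ℚ × ℚ →ₗ[ℚ] ℚ × ℚ where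
  toFun v := (-v.1 - v.2, v.1)
  map_add' a b := by
    simp only [Prod.fst_add, Prod.snd_add, Prod.mk_add_mk, Prod.mk.injEq]
    constructor <;> first | ring | trivial
  map_smul' r v := by
    simp only [Prod.smul_fst, Prod.smul_snd, Prod.smul_mk, smul_eq_mul, RingHom.id_apply,
      Prod.mk.injEq]
    constructor <;> first | ring | trivial

/-- `Yᵀ` over `ℚ`. -/
def Ytl : ℚ × ℚ →ₗ[ℚ] ℚ × ℚ where
  toFun v := (v.2, -v.1)
  map_add' a b := by
    simp only [Prod.fst_add, Prod.snd_add, Prod.mk_add_mk, Prod.mk.injEq]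
    constructor <;> first | ring | trivial
  map_smul' r v := by
    simp only [Prod.smul_fst, Prod.smul_snd, Prod.smul_mk, smul_eq_mul, RingHom.id_apply,
      Prod.mk.injEq]
    constructor <;> first | ring | trivial

@[simp] lemma Xql_apply (v : ℚ × ℚ) : Xql v = (-v.1 + v.2, -v.1) := rfl
@[simp] lemma Yql_apply (v : ℚ × ℚ) : Yql v = (-v.2, v.1) := rfl
@[simp] lemma Xtl_apply (v : ℚ × ℚ) : Xtl v = (-v.1 - v.2, v.1) := rfl
@[simp] lemma Ytl_apply (v : ℚ × ℚ) : Ytl v = (v.2, -v.1) := rfl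

lemma Xql_three (v : ℚ × ℚ) : Xql (Xql (Xql v)) = v := by
  apply Prod.ext <;> simp <;> ring

lemma Xtl_three (v : ℚ × ℚ) : Xtl (Xtl (Xtl v)) = v := by
  apply Prod.ext <;> simp <;> ring

lemma Ytl_two (v : ℚ × ℚ) : Ytl (Ytl v) = -v := by
  apply Prod.ext <;> simp

lemma Ytl_Xtl (v : ℚ × ℚ) : Ytl (Xtl v) = (v.1, v.1 + v.2) := by
  apply Prod.ext <;> simp <;> ring

lemma Xtl_Ytl (v : ℚ × ℚ) : Xtl (Ytl v) = (v.1 - v.2, v.2) := by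
  apply Prod.ext <;> simp <;> ring

/-- standard bilinear pairing on `ℚ²`. -/
def dotq (u v : ℚ × ℚ) : ℚ := u.1 * v.1 + u.2 * v.2

lemma dotq_add_left (a b v : ℚ × ℚ) : dotq (a + b) v = dotq a v + dotq b v := by
  simp [dotq]; ring

lemma dotq_add_right (a b v : ℚ × ℚ) : dotq v (a + b) = dotq v a + dotq v b := by
  simp [dotq]; ring

lemma dotq_Xql (u v : ℚ × ℚ) : dotq (Xql u) v = dotq u (Xtl v) := by
  simp [dotq]; ring

lemma dotq_Yql (u v : ℚ × ℚ) : dotq (Yql u) v = dotq u (Ytl v) := by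
  simp [dotq]; ring

lemma dotq_self_nonneg (u : ℚ × ℚ) : 0 ≤ dotq u u := by
  have := sq_nonneg u.1; have := sq_nonneg u.2
  simp [dotq] at *; nlinarith

lemma dotq_self_eq_zero {u : ℚ × ℚ} (h : dotq u u = 0) : u = 0 := by
  simp only [dotq] at h
  have : u.1 = 0 ∧ u.2 = 0 := by
    constructor <;> nlinarith [sq_nonneg u.1, sq_nonneg u.2]
  exact Prod.ext_iff.mpr (by simpa using this)

lemma dotq_zero_left (v : ℚ × ℚ) : dotq 0 v = 0 := by simp [dotq]

/-- coordinatewise cast `ℤ² → ℚ²`. -/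
def castP (v : ℤ × ℤ) : ℚ × ℚ := ((v.1 : ℚ), (v.2 : ℚ))

lemma castP_inj {v w : ℤ × ℤ} (h : castP v = castP w) : v = w := by
  simp only [castP, Prod.mk.injEq, Int.cast_inj] at h
  exact Prod.ext_iff.mpr h

lemma castP_add (v w : ℤ × ℤ) : castP (v + w) = castP v + castP w := by
  simp [castP, Prod.ext_iff]

lemma castP_zero : castP 0 = 0 := by simp [castP]

section Skel

lemma perm3_apply {nx : Equiv.Perm E} (hnx3 : nx * nx * nx = 1) (β : E) :
    nx (nx (nx β)) = β := by
  have := congrArg (fun f : Equiv.Perm E => f β) hnx3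
  simpa [Equiv.Perm.mul_apply] using this

lemma perm2_apply {op : Equiv.Perm E} (hop2 : op * op = 1) (β : E) :
    op (op β) = β := by
  have := congrArg (fun f : Equiv.Perm E => f β) hop2
  simpa [Equiv.Perm.mul_apply] using this

lemma nx2_ne {nx : Equiv.Perm E} (hnx3 : nx * nx * nx = 1) (hnxf : ∀ α, nx α ≠ α) (β : E) :
    nx (nx β) ≠ β := by
  intro h
  have h2 := congrArg nx h
  rw [perm3_apply hnx3] at h2
  exact hnxf β h2.symm

lemma nx2_ne_nx {nx : Equiv.Perm E} (hnxf : ∀ α, nx α ≠ α) (β : E) :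
    nx (nx β) ≠ nx β := fun h => hnxf β (nx.injective h)

/-- existence of a choice of representatives of `nx`-orbits. -/
lemma exists_rep [Fintype E] [DecidableEq E] (nx : Equiv.Perm E) (hnx3 : nx * nx * nx = 1) :
    ∃ rep : E → E, (∀ β, rep (nx β) = rep β) ∧
      (∀ β, β = rep β ∨ β = nx (rep β) ∨ β = nx (nx (rep β))) := by
  classical
  letI : LinearOrder E := LinearOrder.lift' (Fintype.equivFin E) (Fintype.equivFin E).injective
  have hmin : ∀ (s t : Finset E) (hs : s.Nonempty) (ht : t.Nonempty), s = t →
      s.min' hs = t.min' ht := by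
    rintro s t hs ht rfl; rfl
  set orb : E → Finset E := fun β => {β, nx β, nx (nx β)} with horb
  have hne : ∀ β, (orb β).Nonempty := fun β => ⟨β, by simp [horb]⟩
  have horbnx : ∀ β, orb (nx β) = orb β := by
    intro β
    ext x
    simp only [horb, Finset.mem_insert, Finset.mem_singleton, perm3_apply hnx3]
    tauto
  refine ⟨fun β => (orb β).min' (hne β), fun β => ?_, fun β => ?_⟩
  · exact hmin _ _ (hne (nx β)) (hne β) (horbnx β)
  · have h := Finset.min'_mem (orb β) (hne β)
    simp only [horb, Finset.mem_insert, Finset.mem_singleton] at h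
    dsimp only
    rcases h with h | h | h
    · exact Or.inl h.symm
    · right; right; rw [h, perm3_apply hnx3]
    · right; left; rw [h, perm3_apply hnx3]

variable [Fintype E] [DecidableEq E]

variable (op nx : Equiv.Perm E) (P : Finset E) (rep : E → E)

/-- chosen set of representatives. -/
def RR : Finset E := Finset.image rep Finset.univ

lemma rep_mem_RR (β : E) : rep β ∈ RR rep :=
  Finset.mem_image_of_mem rep (Finset.mem_univ β)

lemma rep_rep {nx : Equiv.Perm E} {rep : E → E}
    (hrep1 : ∀ β, rep (nx β) = rep β)
    (hrep2 : ∀ β, β = rep β ∨ β = nx (rep β) ∨ β = nx (nx (rep β)))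
    (β : E) : rep (rep β) = rep β := by
  rcases hrep2 β with h | h | h
  · exact congrArg rep h.symm
  · conv_rhs => rw [h]
    rw [hrep1]
  · conv_rhs => rw [h]
    rw [hrep1, hrep1]

lemma mem_RR_iff {nx : Equiv.Perm E} {rep : E → E}
    (hrep1 : ∀ β, rep (nx β) = rep β)
    (hrep2 : ∀ β, β = rep β ∨ β = nx (rep β) ∨ β = nx (nx (rep β)))
    (r : E) : r ∈ RR rep ↔ rep r = r := by
  constructor
  · rintro hr
    obtain ⟨β, -, rfl⟩ := Finset.mem_image.mp hr
    exact rep_rep hrep1 hrep2 β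
  · intro h
    rw [← h]; exact rep_mem_RR rep r

/-- vertex condition over `ℚ`. -/
def cVq (α : E) : (E → ℚ × ℚ) →ₗ[ℚ] ℚ × ℚ :=
  (LinearMap.proj α : (E → ℚ × ℚ) →ₗ[ℚ] ℚ × ℚ) +
    Xql.comp (LinearMap.proj (nx α) : (E → ℚ × ℚ) →ₗ[ℚ] ℚ × ℚ) +
    (Xql.comp Xql).comp (LinearMap.proj (nx (nx α)) : (E → ℚ × ℚ) →ₗ[ℚ] ℚ × ℚ)

/-- edge condition over `ℚ`. -/
def cEq (α : E) : (E → ℚ × ℚ) →ₗ[ℚ] ℚ × ℚ :=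
  (LinearMap.proj α : (E → ℚ × ℚ) →ₗ[ℚ] ℚ × ℚ) +
    Yql.comp (LinearMap.proj (op α) : (E → ℚ × ℚ) →ₗ[ℚ] ℚ × ℚ)

@[simp] lemma cVq_apply (α : E) (x : E → ℚ × ℚ) :
    cVq nx α x = x α + Xql (x (nx α)) + Xql (Xql (x (nx (nx α)))) := rfl

@[simp] lemma cEq_apply (α : E) (x : E → ℚ × ℚ) :
    cEq op α x = x α + Yql (x (op α)) := rfl

/-- the full condition map over `ℚ`. -/
def Phi : (E → ℚ × ℚ) →ₗ[ℚ] (↥(RR rep) → ℚ × ℚ) × (↥P → ℚ × ℚ) :=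
  (LinearMap.pi fun r : ↥(RR rep) => cVq nx r.val).prod
    (LinearMap.pi fun a : ↥P => cEq op a.val)

@[simp] lemma Phi_apply (x : E → ℚ × ℚ) :
    Phi op nx P rep x =
      (fun r : ↥(RR rep) => cVq nx r.val x,
       fun a : ↥P => cEq op a.val x) := rfl

lemma cVq_nx_eq (hnx3 : nx * nx * nx = 1) (α : E) (x : E → ℚ × ℚ) :
    cVq nx (nx α) x = Xql (Xql (cVq nx α x)) := by
  simp only [cVq_apply, map_add, perm3_apply hnx3, Xql_three]
  abel

lemma cVq_all_zero (hnx3 : nx * nx * nx = 1)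
    (hrep2 : ∀ β, β = rep β ∨ β = nx (rep β) ∨ β = nx (nx (rep β)))
    (x : E → ℚ × ℚ) (hx : ∀ r : ↥(RR rep), cVq nx r.val x = 0) (α : E) :
    cVq nx α x = 0 := by
  have h0 : cVq nx (rep α) x = 0 := hx ⟨rep α, rep_mem_RR rep α⟩
  rcases hrep2 α with h | h | h
  · rw [h]; exact h0
  · rw [h, cVq_nx_eq nx hnx3, h0]; simp
  · rw [h, cVq_nx_eq nx hnx3, cVq_nx_eq nx hnx3, h0]; simp

/-- vertex part of the transpose map. -/
def vertF (c : ↥(RR rep) → ℚ × ℚ) (β : E) : ℚ × ℚ :=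
  if β = rep β then c ⟨rep β, rep_mem_RR rep β⟩
  else if β = nx (rep β) then Xtl (c ⟨rep β, rep_mem_RR rep β⟩)
  else Xtl (Xtl (c ⟨rep β, rep_mem_RR rep β⟩))

/-- edge part of the transpose map. -/
def eF (d : ↥P → ℚ × ℚ) (β : E) : ℚ × ℚ :=
  if h : β ∈ P then d ⟨β, h⟩
  else if h2 : op β ∈ P then Ytl (d ⟨op β, h2⟩) else 0

lemma vertF_add (c c' : ↥(RR rep) → ℚ × ℚ) (β : E) :
    vertF nx rep (c + c') β = vertF nx rep c β + vertF nx rep c' β := by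
  unfold vertF
  split_ifs <;> simp only [Pi.add_apply, map_add]

lemma vertF_smul (a : ℚ) (c : ↥(RR rep) → ℚ × ℚ) (β : E) :
    vertF nx rep (a • c) β = a • vertF nx rep c β := by
  unfold vertF
  split_ifs <;> simp only [Pi.smul_apply, map_smul]

lemma eF_add (d d' : ↥P → ℚ × ℚ) (β : E) :
    eF op P (d + d') β = eF op P d β + eF op P d' β := by
  unfold eF
  split_ifs <;> simp only [Pi.add_apply, map_add, add_zero]

lemma eF_smul (a : ℚ) (d : ↥P → ℚ × ℚ) (β : E) :
    eF op P (a • d) β = a • eF op P d β := by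
  unfold eF
  split_ifs <;> simp only [Pi.smul_apply, map_smul, smul_zero]

/-- the transpose of `Phi`. -/
def Psi : ((↥(RR rep) → ℚ × ℚ) × (↥P → ℚ × ℚ)) →ₗ[ℚ] (E → ℚ × ℚ) where
  toFun y := fun β => vertF nx rep y.1 β + eF op P y.2 β
  map_add' y z := by
    funext β
    simp only [Prod.fst_add, Prod.snd_add, vertF_add, eF_add, Pi.add_apply]
    abel
  map_smul' a y := by
    funext β
    simp only [Prod.smul_fst, Prod.smul_snd, vertF_smul, eF_smul, RingHom.id_apply,
      Pi.smul_apply]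
    rw [smul_add]

@[simp] lemma Psi_apply (y : (↥(RR rep) → ℚ × ℚ) × (↥P → ℚ × ℚ)) (β : E) :
    Psi op nx P rep y β = vertF nx rep y.1 β + eF op P y.2 β := rfl

section Eval

variable {nx rep}

lemma vertF_at_rep (c : ↥(RR rep) → ℚ × ℚ) (i : ↥(RR rep)) (hr : rep i.val = i.val) :
    vertF nx rep c i.val = c i := by
  unfold vertF
  rw [if_pos hr.symm]
  exact congrArg c (Subtype.ext hr)

lemma vertF_at_nx (hrep1 : ∀ β, rep (nx β) = rep β) (hnxf : ∀ α, nx α ≠ α)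
    (c : ↥(RR rep) → ℚ × ℚ) (i : ↥(RR rep)) (hr : rep i.val = i.val) :
    vertF nx rep c (nx i.val) = Xtl (c i) := by
  unfold vertF
  have h1 : rep (nx i.val) = i.val := by rw [hrep1]; exact hr
  rw [if_neg (by rw [h1]; exact hnxf i.val), if_pos (by rw [h1])]
  exact congrArg (fun u => Xtl (c u)) (Subtype.ext h1)

lemma vertF_at_nx2 (hrep1 : ∀ β, rep (nx β) = rep β) (hnx3 : nx * nx * nx = 1)
    (hnxf : ∀ α, nx α ≠ α)
    (c : ↥(RR rep) → ℚ × ℚ) (i : ↥(RR rep)) (hr : rep i.val = i.val) :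
    vertF nx rep c (nx (nx i.val)) = Xtl (Xtl (c i)) := by
  unfold vertF
  have h1 : rep (nx (nx i.val)) = i.val := by rw [hrep1, hrep1]; exact hr
  rw [if_neg (by rw [h1]; exact nx2_ne hnx3 hnxf i.val),
    if_neg (by rw [h1]; exact nx2_ne_nx hnxf i.val)]
  exact congrArg (fun u => Xtl (Xtl (c u))) (Subtype.ext h1)

/-- the structural relation `f (nx β) = Xᵀ f β` for `f = vertF c`. -/
lemma vertF_nx_step (hrep1 : ∀ β, rep (nx β) = rep β)
    (hrep2 : ∀ β, β = rep β ∨ β = nx (rep β) ∨ β = nx (nx (rep β)))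
    (hnx3 : nx * nx * nx = 1) (hnxf : ∀ α, nx α ≠ α)
    (c : ↥(RR rep) → ℚ × ℚ) (β : E) :
    vertF nx rep c (nx β) = Xtl (vertF nx rep c β) := by
  have hrr : rep (rep β) = rep β := rep_rep hrep1 hrep2 β
  set i : ↥(RR rep) := ⟨rep β, rep_mem_RR rep β⟩ with hi
  have hival : i.val = rep β := rfl
  rcases hrep2 β with h | h | h
  · rw [h]
    rw [show nx (rep β) = nx i.val from rfl, vertF_at_nx hrep1 hnxf c i hrr,
      show (rep β : E) = i.val from rfl, vertF_at_rep c i hrr]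
  · rw [h]
    rw [show nx (nx (rep β)) = nx (nx i.val) from rfl,
      vertF_at_nx2 hrep1 hnx3 hnxf c i hrr,
      show nx (rep β) = nx i.val from rfl, vertF_at_nx hrep1 hnxf c i hrr]
  · rw [h]
    rw [show nx (nx (nx (rep β))) = nx (nx (nx i.val)) from rfl, perm3_apply hnx3,
      show (i.val : E) = rep β from rfl]
    rw [show (rep β : E) = i.val from rfl, vertF_at_rep c i hrr,
      show nx (nx i.val) = nx (nx i.val) from rfl, vertF_at_nx2 hrep1 hnx3 hnxf c i hrr,
      Xtl_three]

end Eval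

lemma Psi_ker (hop2 : op * op = 1) (hnx3 : nx * nx * nx = 1) (hnxf : ∀ α, nx α ≠ α)
    (hP : ∀ α, α ∈ P ↔ op α ∉ P)
    (hrep1 : ∀ β, rep (nx β) = rep β)
    (hrep2 : ∀ β, β = rep β ∨ β = nx (rep β) ∨ β = nx (nx (rep β)))
    (y : (↥(RR rep) → ℚ × ℚ) × (↥P → ℚ × ℚ)) (hy : Psi op nx P rep y = 0) : y = 0 := by
  obtain ⟨c, d⟩ := y
  set f : E → ℚ × ℚ := vertF nx rep c with hf
  have hy' : ∀ β, f β + eF op P d β = 0 := fun β => congrFun hy β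
  have he : ∀ β, eF op P d β = -f β := by
    intro β
    have h := hy' β
    rw [add_comm] at h
    exact eq_neg_of_add_eq_zero_left h
  have hA : ∀ β, f (nx β) = Xtl (f β) := vertF_nx_step hrep1 hrep2 hnx3 hnxf c
  have hBP : ∀ β, β ∈ P → f (op β) = Ytl (f β) := by
    intro β hβ
    have h1 : op β ∉ P := (hP β).mp hβ
    have h2 : op (op β) ∈ P := by rw [perm2_apply hop2]; exact hβ
    have h3 : eF op P d (op β) = Ytl (d ⟨op (op β), h2⟩) := by
      unfold eF; rw [dif_neg h1, dif_pos h2]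
    have hidx : (⟨op (op β), h2⟩ : ↥P) = ⟨β, hβ⟩ := Subtype.ext (perm2_apply hop2 β)
    have hdβ : d ⟨β, hβ⟩ = eF op P d β := by unfold eF; rw [dif_pos hβ]
    calc f (op β) = -(eF op P d (op β)) := by rw [he (op β), neg_neg]
      _ = -(Ytl (d ⟨op (op β), h2⟩)) := by rw [h3]
      _ = -(Ytl (d ⟨β, hβ⟩)) := by rw [hidx]
      _ = -(Ytl (eF op P d β)) := by rw [hdβ]
      _ = -(Ytl (-f β)) := by rw [he β]
      _ = Ytl (f β) := by rw [map_neg, neg_neg]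
  have hB : ∀ β, ∃ ε : ℚ, (ε = 1 ∨ ε = -1) ∧ f (op β) = ε • Ytl (f β) := by
    intro β
    by_cases hβ : β ∈ P
    · exact ⟨1, Or.inl rfl, by rw [one_smul]; exact hBP β hβ⟩
    · have hop : op β ∈ P := (hP (op β)).mpr (by rw [perm2_apply hop2]; exact hβ)
      have h1 : f (op (op β)) = Ytl (f (op β)) := hBP (op β) hop
      rw [perm2_apply hop2] at h1
      refine ⟨-1, Or.inr rfl, ?_⟩
      have h2 : Ytl (f β) = -(f (op β)) := by rw [h1, Ytl_two]
      rw [h2]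
      simp
  have hcomp1 : ∀ β, (f β).1 = 0 := by
    intro β
    set g := op * nx with hg
    have key : ∀ j : ℕ, ∃ ε : ℚ, (ε = 1 ∨ ε = -1) ∧
        f ((g ^ j) β) = ε • ((f β).1, (j : ℚ) * (f β).1 + (f β).2) := by
      intro j
      induction j with
      | zero =>
        refine ⟨1, Or.inl rfl, ?_⟩
        simp
      | succ j ih =>
        obtain ⟨ε, hε, heq⟩ := ih
        obtain ⟨ε₂, hε₂, heq₂⟩ := hB (nx ((g ^ j) β))
        refine ⟨ε₂ * ε, by rcases hε with h | h <;> rcases hε₂ with h2 | h2 <;>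
          rw [h, h2] <;> norm_num, ?_⟩
        have hgj : (g ^ (j + 1)) β = op (nx ((g ^ j) β)) := by
          rw [pow_succ']
          rw [hg, Equiv.Perm.mul_apply, Equiv.Perm.mul_apply]
        rw [hgj, heq₂, hA ((g ^ j) β), heq, map_smul, map_smul, Ytl_Xtl, smul_smul]
        congr 1
        apply Prod.ext
        · simp
        · simp; push_cast; ring
    obtain ⟨ε, hε, heq⟩ := key (orderOf g)
    rw [pow_orderOf_eq_one g] at heq
    rw [show ((1 : Equiv.Perm E)) β = β from rfl] at heq
    have h1 : (f β).1 = ε * (f β).1 := by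
      have := congrArg Prod.fst heq
      simpa using this
    have h2 : (f β).2 = ε * ((orderOf g : ℚ) * (f β).1 + (f β).2) := by
      have := congrArg Prod.snd heq
      simpa using this
    have hk : ((orderOf g : ℕ) : ℚ) ≠ 0 := Nat.cast_ne_zero.mpr (orderOf_pos g).ne'
    rcases hε with h | h
    · rw [h, one_mul] at h2
      have h3 : (orderOf g : ℚ) * (f β).1 = 0 := by linarith
      rcases mul_eq_zero.mp h3 with h' | h'
      · exact absurd h' hk
      · exact h'
    · rw [h] at h1
      linarith
  have hcomp2 : ∀ β, (f β).2 = 0 := by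
    intro β
    set g := nx * op with hg
    have key : ∀ j : ℕ, ∃ ε : ℚ, (ε = 1 ∨ ε = -1) ∧
        f ((g ^ j) β) = ε • ((f β).1 - (j : ℚ) * (f β).2, (f β).2) := by
      intro j
      induction j with
      | zero =>
        refine ⟨1, Or.inl rfl, ?_⟩
        simp
      | succ j ih =>
        obtain ⟨ε, hε, heq⟩ := ih
        obtain ⟨ε₂, hε₂, heq₂⟩ := hB ((g ^ j) β)
        refine ⟨ε₂ * ε, by rcases hε with h | h <;> rcases hε₂ with h2 | h2 <;>
          rw [h, h2] <;> norm_num, ?_⟩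
        have hgj : (g ^ (j + 1)) β = nx (op ((g ^ j) β)) := by
          rw [pow_succ']
          rw [hg, Equiv.Perm.mul_apply, Equiv.Perm.mul_apply]
        rw [hgj, hA (op ((g ^ j) β)), heq₂, heq, map_smul, map_smul, map_smul, Xtl_Ytl,
          smul_smul]
        congr 1
        apply Prod.ext
        · simp; push_cast; ring
        · simp
    obtain ⟨ε, hε, heq⟩ := key (orderOf g)
    rw [pow_orderOf_eq_one g] at heq
    rw [show ((1 : Equiv.Perm E)) β = β from rfl] at heq
    have h1 : (f β).1 = ε * ((f β).1 - (orderOf g : ℚ) * (f β).2) := by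
      have := congrArg Prod.fst heq
      simpa using this
    have h2 : (f β).2 = ε * (f β).2 := by
      have := congrArg Prod.snd heq
      simpa using this
    have hk : ((orderOf g : ℕ) : ℚ) ≠ 0 := Nat.cast_ne_zero.mpr (orderOf_pos g).ne'
    rcases hε with h | h
    · rw [h, one_mul] at h1
      have h3 : (orderOf g : ℚ) * (f β).2 = 0 := by linarith
      rcases mul_eq_zero.mp h3 with h' | h'
      · exact absurd h' hk
      · exact h'
    · rw [h] at h2
      linarith
  have hf0 : ∀ β, f β = 0 := by
    intro β
    have : f β = ((f β).1, (f β).2) := rfl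
    rw [this, hcomp1 β, hcomp2 β]
    rfl
  have hc : c = 0 := by
    funext i
    have hri : rep i.val = i.val := (mem_RR_iff hrep1 hrep2 i.val).mp i.2
    have h1 : vertF nx rep c i.val = c i := vertF_at_rep c i hri
    have h2 : vertF nx rep c i.val = 0 := hf0 i.val
    rw [h1] at h2
    exact h2
  have hd : d = 0 := by
    funext a
    have h1 : eF op P d a.val = d a := by
      unfold eF
      rw [dif_pos a.2]
    have h2 : eF op P d a.val = -f a.val := he a.val
    rw [hf0 a.val, neg_zero] at h2
    rw [h1] at h2
    exact h2
  rw [hc, hd]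
  rfl

/-- fibers of `rep` are `nx`-orbits. -/
lemma fiber_eq {nx : Equiv.Perm E} {rep : E → E}
    (hrep1 : ∀ β, rep (nx β) = rep β)
    (hrep2 : ∀ β, β = rep β ∨ β = nx (rep β) ∨ β = nx (nx (rep β)))
    (r : E) (hr : rep r = r) :
    Finset.univ.filter (fun β => rep β = r) = ({r, nx r, nx (nx r)} : Finset E) := by
  ext β
  simp only [Finset.mem_filter, Finset.mem_univ, true_and, Finset.mem_insert,
    Finset.mem_singleton]
  constructor
  · intro h
    rcases hrep2 β with h2 | h2 | h2
    · left; rw [h2, h]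
    · right; left; rw [h2, h]
    · right; right; rw [h2, h]
  · rintro (h | h | h)
    · rw [h]; exact hr
    · rw [h, hrep1]; exact hr
    · rw [h, hrep1, hrep1]; exact hr

/-- inner product on `E → ℚ²`. -/
def ipE (x y : E → ℚ × ℚ) : ℚ := ∑ β, dotq (x β) (y β)

/-- inner product on the target of `Phi`. -/
def ipT (u v : (↥(RR rep) → ℚ × ℚ) × (↥P → ℚ × ℚ)) : ℚ :=
  (∑ i, dotq (u.1 i) (v.1 i)) + ∑ a, dotq (u.2 a) (v.2 a)

lemma ipE_self_zero (x : E → ℚ × ℚ) (h : ipE x x = 0) : x = 0 := by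
  have h2 := (Finset.sum_eq_zero_iff_of_nonneg
    (fun β _ => dotq_self_nonneg (x β))).mp h
  funext β
  exact dotq_self_eq_zero (h2 β (Finset.mem_univ β))

lemma adj {op nx : Equiv.Perm E} {P : Finset E} {rep : E → E}
    (hop2 : op * op = 1) (hnx3 : nx * nx * nx = 1) (hnxf : ∀ α, nx α ≠ α)
    (hP : ∀ α, α ∈ P ↔ op α ∉ P)
    (hrep1 : ∀ β, rep (nx β) = rep β)
    (hrep2 : ∀ β, β = rep β ∨ β = nx (rep β) ∨ β = nx (nx (rep β)))
    (x : E → ℚ × ℚ) (y : (↥(RR rep) → ℚ × ℚ) × (↥P → ℚ × ℚ)) :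
    ipT P rep (Phi op nx P rep x) y = ipE x (Psi op nx P rep y) := by
  obtain ⟨c, d⟩ := y
  set C : E → ℚ × ℚ := fun r => c ⟨rep r, rep_mem_RR rep r⟩ with hC
  set D : E → ℚ × ℚ := fun β => if h : β ∈ P then d ⟨β, h⟩ else 0 with hD
  have hCi : ∀ i : ↥(RR rep), c i = C i.val := by
    intro i
    have hri : rep i.val = i.val := (mem_RR_iff hrep1 hrep2 i.val).mp i.2
    rw [hC]
    exact (congrArg c (Subtype.ext hri)).symm
  have hDa : ∀ a : ↥P, d a = D a.val := by
    intro a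
    simp only [hD, dif_pos a.2, Subtype.coe_eta]
  have hvert : ∑ i : ↥(RR rep), dotq (cVq nx i.val x) (c i)
      = ∑ β, dotq (x β) (vertF nx rep c β) := by
    rw [Finset.sum_congr rfl
      (fun (i : ↥(RR rep)) _ => by rw [hCi i] :
        ∀ i ∈ (Finset.univ : Finset ↥(RR rep)),
          dotq (cVq nx i.val x) (c i) = (fun r => dotq (cVq nx r x) (C r)) i.val)]
    rw [Finset.sum_coe_sort (RR rep) (fun r => dotq (cVq nx r x) (C r))]
    have hmap : ∀ β ∈ (Finset.univ : Finset E), rep β ∈ RR rep :=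
      fun β _ => rep_mem_RR rep β
    rw [← Finset.sum_fiberwise_of_maps_to hmap (fun β => dotq (x β) (vertF nx rep c β))]
    apply Finset.sum_congr rfl
    intro r hr
    have hri : rep r = r := (mem_RR_iff hrep1 hrep2 r).mp hr
    have hne1 : r ∉ ({nx r, nx (nx r)} : Finset E) := by
      simp only [Finset.mem_insert, Finset.mem_singleton]
      push_neg
      exact ⟨fun h => hnxf r h.symm, fun h => nx2_ne hnx3 hnxf r h.symm⟩
    have hne2 : nx r ∉ ({nx (nx r)} : Finset E) := by
      simp only [Finset.mem_singleton]
      exact fun h => nx2_ne_nx hnxf r h.symm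
    rw [fiber_eq hrep1 hrep2 r hri, Finset.sum_insert hne1, Finset.sum_insert hne2,
      Finset.sum_singleton]
    have e1 : vertF nx rep c r = c ⟨r, hr⟩ := vertF_at_rep c ⟨r, hr⟩ hri
    have e2 : vertF nx rep c (nx r) = Xtl (c ⟨r, hr⟩) :=
      vertF_at_nx hrep1 hnxf c ⟨r, hr⟩ hri
    have e3 : vertF nx rep c (nx (nx r)) = Xtl (Xtl (c ⟨r, hr⟩)) :=
      vertF_at_nx2 hrep1 hnx3 hnxf c ⟨r, hr⟩ hri
    have e4 : C r = c ⟨r, hr⟩ := (hCi ⟨r, hr⟩).symm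
    rw [e1, e2, e3, e4, cVq_apply, dotq_add_left, dotq_add_left, dotq_Xql, dotq_Xql,
      dotq_Xql]
    ring
  have hedge : ∑ a : ↥P, dotq (cEq op a.val x) (d a)
      = ∑ β, dotq (x β) (eF op P d β) := by
    rw [Finset.sum_congr rfl
      (fun (a : ↥P) _ => by rw [hDa a] :
        ∀ a ∈ (Finset.univ : Finset ↥P),
          dotq (cEq op a.val x) (d a) = (fun β => dotq (cEq op β x) (D β)) a.val)]
    rw [Finset.sum_coe_sort P (fun β => dotq (cEq op β x) (D β))]
    rw [← Finset.sum_add_sum_compl P (fun β => dotq (x β) (eF op P d β))]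
    have hsplit : ∀ β, dotq (cEq op β x) (D β)
        = dotq (x β) (D β) + dotq (x (op β)) (Ytl (D β)) := by
      intro β
      rw [cEq_apply, dotq_add_left, dotq_Yql]
    rw [Finset.sum_congr rfl (fun β _ => hsplit β), Finset.sum_add_distrib]
    congr 1
    · apply Finset.sum_congr rfl
      intro β hβ
      have : eF op P d β = D β := by
        unfold eF
        simp only [hD, dif_pos hβ]
      rw [this]
    · apply Finset.sum_bij' (i := fun β (_ : β ∈ P) => op β)
        (j := fun β (_ : β ∈ Pᶜ) => op β)
      · intro a ha
        rw [Finset.mem_compl]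
        exact (hP a).mp ha
      · intro a ha
        exact (hP (op a)).mpr (by rw [perm2_apply hop2]; exact Finset.mem_compl.mp ha)
      · intro a _
        exact perm2_apply hop2 a
      · intro a _
        exact perm2_apply hop2 a
      · intro a ha
        have h1 : op a ∉ P := (hP a).mp ha
        have h2 : op (op a) ∈ P := by rw [perm2_apply hop2]; exact ha
        have h3 : eF op P d (op a) = Ytl (d ⟨op (op a), h2⟩) := by
          unfold eF
          rw [dif_neg h1, dif_pos h2]
        have h4 : (⟨op (op a), h2⟩ : ↥P) = ⟨a, ha⟩ := Subtype.ext (perm2_apply hop2 a)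
        have h5 : D a = d ⟨a, ha⟩ := by simp only [hD, dif_pos ha]
        rw [h3, h4, h5]
  show (∑ i : ↥(RR rep), dotq (cVq nx i.val x) (c i))
      + (∑ a : ↥P, dotq (cEq op a.val x) (d a)) = _
  rw [hvert, hedge]
  unfold ipE
  rw [← Finset.sum_add_distrib]
  apply Finset.sum_congr rfl
  intro β _
  rw [Psi_apply, dotq_add_right]

lemma Phi_surj {op nx : Equiv.Perm E} {P : Finset E} {rep : E → E}
    (hop2 : op * op = 1) (hnx3 : nx * nx * nx = 1) (hnxf : ∀ α, nx α ≠ α)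
    (hP : ∀ α, α ∈ P ↔ op α ∉ P)
    (hrep1 : ∀ β, rep (nx β) = rep β)
    (hrep2 : ∀ β, β = rep β ∨ β = nx (rep β) ∨ β = nx (nx (rep β))) :
    Function.Surjective (Phi op nx P rep) := by
  have hinj : Function.Injective ((Phi op nx P rep).comp (Psi op nx P rep)) := by
    rw [← LinearMap.ker_eq_bot, LinearMap.ker_eq_bot']
    intro y hy
    rw [LinearMap.comp_apply] at hy
    have h0 : ipT P rep (Phi op nx P rep (Psi op nx P rep y)) y = 0 := by
      rw [hy]
      simp [ipT, dotq]
    rw [adj hop2 hnx3 hnxf hP hrep1 hrep2] at h0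
    exact Psi_ker op nx P rep hop2 hnx3 hnxf hP hrep1 hrep2 y (ipE_self_zero _ h0)
  have hTsurj : Function.Surjective ((Phi op nx P rep).comp (Psi op nx P rep)) :=
    LinearMap.injective_iff_surjective.mp hinj
  intro z
  obtain ⟨w, hw⟩ := hTsurj z
  exact ⟨Psi op nx P rep w, hw⟩

lemma card_RR {nx : Equiv.Perm E} {rep : E → E}
    (hnx3 : nx * nx * nx = 1) (hnxf : ∀ α, nx α ≠ α)
    (hrep1 : ∀ β, rep (nx β) = rep β)
    (hrep2 : ∀ β, β = rep β ∨ β = nx (rep β) ∨ β = nx (nx (rep β))) :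
    3 * (RR rep).card = Fintype.card E := by
  have h := Finset.card_eq_sum_card_fiberwise
    (f := rep) (s := Finset.univ) (t := RR rep) (fun β _ => rep_mem_RR rep β)
  rw [Finset.card_univ] at h
  have h2 : ∀ r ∈ RR rep, (Finset.univ.filter (fun β => rep β = r)).card = 3 := by
    intro r hr
    have hri : rep r = r := (mem_RR_iff hrep1 hrep2 r).mp hr
    have hne1 : r ∉ ({nx r, nx (nx r)} : Finset E) := by
      simp only [Finset.mem_insert, Finset.mem_singleton]
      push_neg
      exact ⟨fun h => hnxf r h.symm, fun h => nx2_ne hnx3 hnxf r h.symm⟩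
    have hne2 : nx r ∉ ({nx (nx r)} : Finset E) := by
      simp only [Finset.mem_singleton]
      exact fun h => nx2_ne_nx hnxf r h.symm
    rw [fiber_eq hrep1 hrep2 r hri, Finset.card_insert_of_notMem hne1,
      Finset.card_insert_of_notMem hne2, Finset.card_singleton]
  rw [Finset.sum_congr rfl h2, Finset.sum_const, smul_eq_mul] at h
  omega

lemma card_P {op : Equiv.Perm E} {P : Finset E}
    (hop2 : op * op = 1) (hP : ∀ α, α ∈ P ↔ op α ∉ P) :
    2 * P.card = Fintype.card E := by
  have h1 : Pᶜ.card = P.card := by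
    apply Finset.card_bij' (i := fun a (_ : a ∈ Pᶜ) => op a) (j := fun a (_ : a ∈ P) => op a)
    · intro a ha
      exact (hP (op a)).mpr (by rw [perm2_apply hop2]; exact Finset.mem_compl.mp ha)
    · intro a ha
      rw [Finset.mem_compl]
      exact (hP a).mp ha
    · intro a _
      exact perm2_apply hop2 a
    · intro a _
      exact perm2_apply hop2 a
  have h2 := Finset.card_add_card_compl P
  omega

lemma finrank_ker_Phi {op nx : Equiv.Perm E} {P : Finset E} {rep : E → E}
    (hop2 : op * op = 1) (hnx3 : nx * nx * nx = 1) (hnxf : ∀ α, nx α ≠ α)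
    (hP : ∀ α, α ∈ P ↔ op α ∉ P)
    (hrep1 : ∀ β, rep (nx β) = rep β)
    (hrep2 : ∀ β, β = rep β ∨ β = nx (rep β) ∨ β = nx (nx (rep β))) :
    Module.finrank ℚ ↥(LinearMap.ker (Phi op nx P rep)) = Fintype.card E / 3 := by
  have hrn := LinearMap.finrank_range_add_finrank_ker (Phi op nx P rep)
  rw [LinearMap.range_eq_top.mpr (Phi_surj hop2 hnx3 hnxf hP hrep1 hrep2), finrank_top] at hrn
  have hQQ : Module.finrank ℚ (ℚ × ℚ) = 2 := by
    rw [Module.finrank_prod, Module.finrank_self]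
  have hdom : Module.finrank ℚ (E → ℚ × ℚ) = 2 * Fintype.card E := by
    rw [Module.finrank_pi_fintype, Finset.sum_congr rfl (fun β _ => hQQ),
      Finset.sum_const, smul_eq_mul, Finset.card_univ]
    ring
  have htgt : Module.finrank ℚ ((↥(RR rep) → ℚ × ℚ) × (↥P → ℚ × ℚ))
      = 2 * (RR rep).card + 2 * P.card := by
    rw [Module.finrank_prod, Module.finrank_pi_fintype, Module.finrank_pi_fintype]
    rw [Finset.sum_congr rfl (fun i _ => hQQ), Finset.sum_congr rfl (fun i _ => hQQ)]
    rw [Finset.sum_const, Finset.sum_const, smul_eq_mul, smul_eq_mul, Finset.card_univ,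
      Finset.card_univ, Fintype.card_coe, Fintype.card_coe]
    ring
  rw [hdom, htgt] at hrn
  have hc3 := card_RR hnx3 hnxf hrep1 hrep2
  have hc2 := card_P hop2 hP
  omega

lemma castP_Xact (v : ℤ × ℤ) : castP (Xact v) = Xql (castP v) := by
  show castP (-v.1 + v.2, -v.1) = _
  unfold castP
  apply Prod.ext <;> simp <;> push_cast <;> ring

lemma castP_Yact (v : ℤ × ℤ) : castP (Yact v) = Yql (castP v) := by
  show castP (-v.2, v.1) = _
  unfold castP
  apply Prod.ext <;> simp

/-- coordinatewise cast as a `ℤ`-linear map. -/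
def castL : (E → ℤ × ℤ) →ₗ[ℤ] (E → ℚ × ℚ) where
  toFun x := fun β => castP (x β)
  map_add' x y := by
    funext β
    exact castP_add (x β) (y β)
  map_smul' z x := by
    funext β
    show castP (z • x β) = z • castP (x β)
    unfold castP
    rw [Prod.smul_def, Prod.smul_def]
    apply Prod.ext <;> simp only [smul_eq_mul, zsmul_eq_mul] <;> push_cast <;> ring

lemma castL_inj : Function.Injective (castL (E := E)) := by
  intro x y h
  funext β
  exact castP_inj (congrFun h β)

lemma cast_condV (nx : Equiv.Perm E) (α : E) (x : E → ℤ × ℤ) :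
    castP (condV nx α x) = cVq nx α (castL x) := by
  show castP (x α + Xact (x (nx α)) + Xact (Xact (x (nx (nx α))))) = _
  rw [castP_add, castP_add, castP_Xact, castP_Xact, castP_Xact, cVq_apply]
  rfl

lemma cast_condE (op : Equiv.Perm E) (α : E) (x : E → ℤ × ℤ) :
    castP (condE op α x) = cEq op α (castL x) := by
  show castP (x α + Yact (x (op α))) = _
  rw [castP_add, castP_Yact, cEq_apply]
  rfl

lemma mem_HGrp_iff (op nx : Equiv.Perm E) (P : Finset E) (x : E → ℤ × ℤ) :
    x ∈ HGrp op nx P ↔ (∀ α, condV nx α x = 0) ∧ (∀ α ∈ P, condE op α x = 0) := by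
  simp [HGrp, AddSubgroup.mem_inf, AddSubgroup.mem_iInf, AddMonoidHom.mem_ker]

lemma castL_mem_ker_iff {op nx : Equiv.Perm E} {P : Finset E} {rep : E → E}
    (hnx3 : nx * nx * nx = 1)
    (hrep2 : ∀ β, β = rep β ∨ β = nx (rep β) ∨ β = nx (nx (rep β)))
    (x : E → ℤ × ℤ) :
    castL x ∈ LinearMap.ker (Phi op nx P rep) ↔ x ∈ HGrp op nx P := by
  rw [LinearMap.mem_ker, mem_HGrp_iff]
  constructor
  · intro h
    have h1 : ∀ i : ↥(RR rep), cVq nx i.val (castL x) = 0 :=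
      fun i => congrFun (congrArg Prod.fst h) i
    have h2 : ∀ a : ↥P, cEq op a.val (castL x) = 0 :=
      fun a => congrFun (congrArg Prod.snd h) a
    constructor
    · intro α
      apply castP_inj
      rw [cast_condV, castP_zero]
      exact cVq_all_zero nx rep hnx3 hrep2 (castL x) h1 α
    · intro α hα
      apply castP_inj
      rw [cast_condE, castP_zero]
      exact h2 ⟨α, hα⟩
  · rintro ⟨h1, h2⟩
    have hv : ∀ α, cVq nx α (castL x) = 0 := by
      intro α
      rw [← cast_condV, h1 α, castP_zero]
    have he : ∀ α ∈ P, cEq op α (castL x) = 0 := by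
      intro α hα
      rw [← cast_condE, h2 α hα, castP_zero]
    rw [Phi_apply]
    refine Prod.ext_iff.mpr ⟨?_, ?_⟩
    · funext i
      exact hv i.val
    · funext a
      exact he a.val a.2

lemma int_of_den_dvd (q : ℚ) (dd : ℤ) (h : (q.den : ℤ) ∣ dd) :
    ((dd / (q.den : ℤ) * q.num : ℤ) : ℚ) = (dd : ℚ) * q := by
  obtain ⟨k, hk⟩ := h
  have hden : ((q.den : ℤ)) ≠ 0 := Int.natCast_ne_zero.mpr q.den_nz
  have hdenQ : ((q.den : ℚ)) ≠ 0 := Nat.cast_ne_zero.mpr q.den_nz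
  subst hk
  rw [Int.mul_ediv_cancel_left _ hden]
  have hq : (q.den : ℚ) * q = (q.num : ℚ) := by
    rw [mul_comm]
    exact Rat.mul_den_eq_num q
  push_cast
  linear_combination (-(k : ℚ)) * hq

end Skel

/-- `H_Γ` is free abelian of rank `|E| / 3`. -/
theorem HGrp_free_of_rank [Fintype E] [DecidableEq E] [Nonempty E]
    (op nx : Equiv.Perm E) (P : Finset E)
    (hop2 : op * op = 1) (hopf : ∀ α, op α ≠ α)
    (hnx3 : nx * nx * nx = 1) (hnxf : ∀ α, nx α ≠ α)
    (hconn : ∀ a b : E, ∃ w ∈ Subgroup.closure ({op, nx} : Set (Equiv.Perm E)), w a = b)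
    (hP : ∀ α, α ∈ P ↔ op α ∉ P) :
    Nonempty (Module.Basis (Fin (Fintype.card E / 3)) ℤ (HGrp op nx P)) := by
  classical
  obtain ⟨rep, hrep1, hrep2⟩ := exists_rep nx hnx3
  set S : Submodule ℤ (E → ℤ × ℤ) := AddSubgroup.toIntSubmodule (HGrp op nx P) with hSdef
  obtain ⟨r, bN⟩ := Submodule.basisOfPid
    (Pi.basis fun _ : E => (Module.Basis.singleton (Fin 1) ℤ).prod (Module.Basis.singleton (Fin 1) ℤ)) S
  have hmemH : ∀ i, ((bN i : ↥S) : E → ℤ × ℤ) ∈ HGrp op nx P := fun i => (bN i).2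
  have hker : ∀ i, castL (((bN i : ↥S) : E → ℤ × ℤ)) ∈ LinearMap.ker (Phi op nx P rep) :=
    fun i => (castL_mem_ker_iff hnx3 hrep2 _).mpr (hmemH i)
  let v : Fin r → ↥(LinearMap.ker (Phi op nx P rep)) :=
    fun i => ⟨castL (((bN i : ↥S) : E → ℤ × ℤ)), hker i⟩
  -- independence
  have hind0 : LinearIndependent ℤ (fun i => ((bN i : ↥S) : E → ℤ × ℤ)) := by
    have := bN.linearIndependent.map' S.subtype (Submodule.ker_subtype S)
    exact this
  have hind1 : LinearIndependent ℤ (fun i => castL (((bN i : ↥S) : E → ℤ × ℤ))) := by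
    have := hind0.map' castL (LinearMap.ker_eq_bot.mpr castL_inj)
    exact this
  have hind2 : LinearIndependent ℚ (fun i => castL (((bN i : ↥S) : E → ℤ × ℤ))) :=
    (LinearIndependent.iff_fractionRing ℤ ℚ).mp hind1
  have hindv : LinearIndependent ℚ v := by
    apply LinearIndependent.of_comp (LinearMap.ker (Phi op nx P rep)).subtype
    exact hind2
  -- spanning
  have hspan : ⊤ ≤ Submodule.span ℚ (Set.range v) := by
    rintro w -
    set W : E → ℚ × ℚ := (w : E → ℚ × ℚ) with hW
    set dd : ℤ := ∏ β, (((W β).1.den : ℤ) * ((W β).2.den : ℤ)) with hdd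
    have hddpos : 0 < dd := Finset.prod_pos (fun β _ => mul_pos
      (Int.natCast_pos.mpr (W β).1.pos) (Int.natCast_pos.mpr (W β).2.pos))
    have hdvd1 : ∀ β, (((W β).1.den : ℤ)) ∣ dd := fun β =>
      dvd_trans (dvd_mul_right _ _) (Finset.dvd_prod_of_mem _ (Finset.mem_univ β))
    have hdvd2 : ∀ β, (((W β).2.den : ℤ)) ∣ dd := fun β =>
      dvd_trans (dvd_mul_left _ _) (Finset.dvd_prod_of_mem _ (Finset.mem_univ β))
    set x : E → ℤ × ℤ := fun β =>
      (dd / ((W β).1.den : ℤ) * (W β).1.num, dd / ((W β).2.den : ℤ) * (W β).2.num) with hx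
    have hcast : castL x = (dd : ℚ) • W := by
      funext β
      show castP (x β) = ((dd : ℚ) • W) β
      rw [Pi.smul_apply, Prod.smul_def]
      unfold castP
      apply Prod.ext
      · show ((dd / ((W β).1.den : ℤ) * (W β).1.num : ℤ) : ℚ) = (dd : ℚ) • (W β).1
        rw [smul_eq_mul]
        exact int_of_den_dvd _ _ (hdvd1 β)
      · show ((dd / ((W β).2.den : ℤ) * (W β).2.num : ℤ) : ℚ) = (dd : ℚ) • (W β).2
        rw [smul_eq_mul]
        exact int_of_den_dvd _ _ (hdvd2 β)
    have hxS : x ∈ S := by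
      show x ∈ S
      have hkx : castL x ∈ LinearMap.ker (Phi op nx P rep) := by
        rw [hcast]
        exact Submodule.smul_mem _ _ w.2
      exact (castL_mem_ker_iff hnx3 hrep2 x).mp hkx
    have hrepr := Module.Basis.sum_repr bN ⟨x, hxS⟩
    set z : Fin r → ℤ := fun i => bN.repr ⟨x, hxS⟩ i with hz
    have hx2 : ∑ i, z i • ((bN i : ↥S) : E → ℤ × ℤ) = x := by
      have h := congrArg (S.subtype) hrepr
      rw [map_sum] at h
      simpa using h
    have hx3 : castL x = ∑ i, z i • castL (((bN i : ↥S) : E → ℤ × ℤ)) := by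
      rw [← hx2, map_sum]
      apply Finset.sum_congr rfl
      intro i _
      rw [map_smul]
    have hdd0 : ((dd : ℚ)) ≠ 0 := Int.cast_ne_zero.mpr hddpos.ne'
    have hwv : W ∈ Submodule.span ℚ
        (Set.range (fun i => castL (((bN i : ↥S) : E → ℤ × ℤ)))) := by
      have hWeq : W = (dd : ℚ)⁻¹ • castL x := by
        rw [hcast, smul_smul, inv_mul_cancel₀ hdd0, one_smul]
      rw [hWeq, hx3]
      apply Submodule.smul_mem
      apply Submodule.sum_mem
      intro i _
      rw [← Int.cast_smul_eq_zsmul ℚ]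
      exact Submodule.smul_mem _ _ (Submodule.subset_span ⟨i, rfl⟩)
    have h5 : W ∈ Submodule.map (LinearMap.ker (Phi op nx P rep)).subtype
        (Submodule.span ℚ (Set.range v)) := by
      rw [Submodule.map_span]
      have himg : (LinearMap.ker (Phi op nx P rep)).subtype '' Set.range v
          = Set.range (fun i => castL (((bN i : ↥S) : E → ℤ × ℤ))) := by
        rw [← Set.range_comp]
        rfl
      rw [himg]
      exact hwv
    obtain ⟨u, hu, huv⟩ := Submodule.mem_map.mp h5
    have huw : u = w := Subtype.ext huv
    rw [← huw]
    exact hu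
  let bQ : Module.Basis (Fin r) ℚ ↥(LinearMap.ker (Phi op nx P rep)) := Module.Basis.mk hindv hspan
  have hfr : Module.finrank ℚ ↥(LinearMap.ker (Phi op nx P rep)) = r := by
    rw [Module.finrank_eq_card_basis bQ, Fintype.card_fin]
  have hr3 : r = Fintype.card E / 3 := by
    rw [← hfr, finrank_ker_Phi hop2 hnx3 hnxf hP hrep1 hrep2]
  let eqv : ↥S ≃ₗ[ℤ] ↥(HGrp op nx P) :=
    { toFun := fun u => ⟨u.val, u.2⟩
      invFun := fun u => ⟨u.val, u.2⟩
      map_add' := fun _ _ => rfl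
      map_smul' := fun _ _ => rfl
      left_inv := fun _ => rfl
      right_inv := fun _ => rfl }
  exact ⟨(bN.map eqv).reindex (finCongr hr3)⟩
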